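/- (Bollobás–Thomason inequality) Let K be a convex body in ℝⁿ and let (σ₁,…,σ_m) be an s-cover of [n]. Then vol_n(K)^s ≤ ∏_{i=1}^m vol_{|σ_i|}(P_{H_{σ_i}} K), where P_{H_τ} denotes orthogonal projection onto the coordinate subspace H_τ = span{e_i : i ∈ τ}. -/

import Mathlib

open Finset MeasureTheory

open scoped ENNReal

section Finner

variable {δ : Type*} [DecidableEq δ] {A : δ → Type*} [∀ i, MeasurableSpace (A i)]
  (μ : ∀ i, Measure (A i)) [∀ i, SigmaFinite (μ i)]

private lemma pow_rpow_inv_nat {s : ℕ} (hs : s ≠ 0) (a : ℝ≥0∞) :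
    (a ^ s) ^ ((s : ℝ)⁻¹) = a := by
  rw [← ENNReal.rpow_natCast a s, ← ENNReal.rpow_mul,
    mul_inv_cancel₀ (by exact_mod_cast hs), ENNReal.rpow_one]

private lemma rpow_inv_nat_pow {s : ℕ} (hs : s ≠ 0) (a : ℝ≥0∞) :
    (a ^ ((s : ℝ)⁻¹)) ^ s = a := by
  rw [← ENNReal.rpow_natCast _ s, ← ENNReal.rpow_mul,
    inv_mul_cancel₀ (by exact_mod_cast hs), ENNReal.rpow_one]

/-- If `f` depends only on the coordinates in `σ`, so does any marginal of `f`. -/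
private lemma lmarginal_depends {σ : Finset δ} {f : (∀ j, A j) → ℝ≥0∞}
    (hdep : ∀ x y : ∀ j, A j, (∀ j ∈ σ, x j = y j) → f x = f y) (u : Finset δ)
    {x y : ∀ j, A j} (hxy : ∀ j ∈ σ, x j = y j) :
    (∫⋯∫⁻_u, f ∂μ) x = (∫⋯∫⁻_u, f ∂μ) y := by
  refine lintegral_congr fun z => hdep _ _ fun j hj => ?_
  simp only [Function.updateFinset]
  split
  · rfl
  · exact hxy j hj

/-- **Finner's inequality** (functional Bollobás–Thomason), proved by induction on the finset of
integrated coordinates. -/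
theorem finner_aux {m s : ℕ} (hs : s ≠ 0) (σ : Fin m → Finset δ)
    (hcov : ∀ j : δ, (Finset.univ.filter fun i => j ∈ σ i).card = s)
    (t : Finset δ) :
    ∀ f : Fin m → (∀ j, A j) → ℝ≥0∞, (∀ i, Measurable (f i)) →
      (∀ i, ∀ x y : ∀ j, A j, (∀ j ∈ σ i, x j = y j) → f i x = f i y) →
      ∀ x, (∫⋯∫⁻_t, (fun z => ∏ i, f i z) ∂μ) x ≤
        ∏ i, ((∫⋯∫⁻_(σ i ∩ t), (fun z => f i z ^ s) ∂μ) x) ^ ((s : ℝ)⁻¹) := by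
  induction t using Finset.induction with
  | empty =>
    intro f hf hdep x
    simp only [Finset.inter_empty, lmarginal_empty]
    exact le_of_eq (Finset.prod_congr rfl fun i _ => (pow_rpow_inv_nat hs _).symm)
  | @insert j t hjt ih =>
    intro f hf hdep x
    have hprod : Measurable fun z => ∏ i, f i z := Finset.measurable_prod _ fun i _ => hf i
    set F : Fin m → (∀ j, A j) → ℝ≥0∞ := fun i =>
      if j ∈ σ i then fun z => ((∫⋯∫⁻_{j}, (fun w => f i w ^ s) ∂μ) z) ^ ((s : ℝ)⁻¹)
      else f i with hF
    have hFmeas : ∀ i, Measurable (F i) := by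
      intro i
      rw [hF]; dsimp only
      split_ifs
      · exact (((hf i).pow_const s).lmarginal μ).pow_const _
      · exact hf i
    have hFdep : ∀ i, ∀ x y : ∀ j, A j, (∀ l ∈ σ i, x l = y l) → F i x = F i y := by
      intro i x y hxy
      rw [hF]; dsimp only
      split_ifs
      · exact congrArg (fun a => a ^ ((s : ℝ)⁻¹))
          (lmarginal_depends μ (f := fun w => f i w ^ s)
            (fun a b hab => by rw [hdep i a b hab]) {j} hxy)
      · exact hdep i x y hxy
    -- the pointwise (inner-integral) estimate coming from Hölder's inequality
    have hinner : ∀ z, (∫⁻ xj, ∏ i, f i (Function.update z j xj) ∂μ j) ≤ ∏ i, F i z := by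
      intro z
      have hsplit : ∀ xj, ∏ i, f i (Function.update z j xj)
          = (∏ i ∈ Finset.univ.filter fun i => j ∈ σ i, f i (Function.update z j xj))
            * ∏ i ∈ Finset.univ.filter fun i => ¬ j ∈ σ i, f i z := by
        intro xj
        rw [← Finset.prod_filter_mul_prod_filter_not Finset.univ (fun i => j ∈ σ i)]
        congr 1
        refine Finset.prod_congr rfl fun i hi => ?_
        simp only [Finset.mem_filter] at hi
        exact hdep i _ _ fun l hl =>
          Function.update_of_ne (fun h => hi.2 (by rw [← h]; exact hl)) _ _
      calc (∫⁻ xj, ∏ i, f i (Function.update z j xj) ∂μ j)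
          = (∫⁻ xj, ∏ i ∈ Finset.univ.filter fun i => j ∈ σ i,
              f i (Function.update z j xj) ∂μ j)
            * ∏ i ∈ Finset.univ.filter fun i => ¬ j ∈ σ i, f i z := by
            simp_rw [hsplit]
            exact lintegral_mul_const _
              (Finset.measurable_prod _ fun i _ => (hf i).comp (measurable_update _))
        _ ≤ (∏ i ∈ Finset.univ.filter fun i => j ∈ σ i,
              (∫⁻ xj, f i (Function.update z j xj) ^ s ∂μ j) ^ ((s:ℝ)⁻¹))
            * ∏ i ∈ Finset.univ.filter fun i => ¬ j ∈ σ i, f i z := by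
            gcongr
            have := ENNReal.lintegral_prod_norm_pow_le
              (μ := μ j) (Finset.univ.filter fun i => j ∈ σ i)
              (f := fun i xj => f i (Function.update z j xj) ^ s)
              (fun i _ => (((hf i).comp (measurable_update _)).pow_const s).aemeasurable)
              (p := fun _ => (s : ℝ)⁻¹)
              (by
                rw [Finset.sum_const, hcov j, nsmul_eq_mul]
                exact mul_inv_cancel₀ (by exact_mod_cast hs))
              (fun i _ => by positivity)
            refine le_trans (le_of_eq ?_) this
            refine lintegral_congr fun xj => Finset.prod_congr rfl fun i _ => ?_
            exact (pow_rpow_inv_nat hs _).symm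
        _ = ∏ i, F i z := by
            rw [← Finset.prod_filter_mul_prod_filter_not Finset.univ (fun i => j ∈ σ i) (F · z)]
            congr 1
            · refine Finset.prod_congr rfl fun i hi => ?_
              simp only [Finset.mem_filter] at hi
              rw [hF]; dsimp only
              rw [if_pos hi.2, lmarginal_singleton]
            · refine Finset.prod_congr rfl fun i hi => ?_
              simp only [Finset.mem_filter] at hi
              rw [hF]; dsimp only
              rw [if_neg hi.2]
    calc (∫⋯∫⁻_insert j t, (fun z => ∏ i, f i z) ∂μ) x
        = (∫⋯∫⁻_t, (fun z => ∫⁻ xj, ∏ i, f i (Function.update z j xj) ∂μ j) ∂μ) x := by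
          rw [lmarginal_insert' _ hprod hjt]
      _ ≤ (∫⋯∫⁻_t, (fun z => ∏ i, F i z) ∂μ) x := lmarginal_mono (fun z => hinner z) x
      _ ≤ ∏ i, ((∫⋯∫⁻_(σ i ∩ t), (fun z => F i z ^ s) ∂μ) x) ^ ((s : ℝ)⁻¹) :=
          ih F hFmeas hFdep x
      _ = ∏ i, ((∫⋯∫⁻_(σ i ∩ insert j t), (fun z => f i z ^ s) ∂μ) x) ^ ((s : ℝ)⁻¹) := by
          refine Finset.prod_congr rfl fun i _ => ?_
          congr 1
          by_cases hij : j ∈ σ i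
          · have h1 : (fun z => F i z ^ s) = ∫⋯∫⁻_{j}, (fun w => f i w ^ s) ∂μ := by
              funext z
              rw [hF]; dsimp only
              rw [if_pos hij, rpow_inv_nat_pow hs]
            have h2 : σ i ∩ insert j t = (σ i ∩ t) ∪ {j} := by
              rw [Finset.inter_insert_of_mem hij, Finset.insert_eq, Finset.union_comm]
            have hdisj : Disjoint (σ i ∩ t) ({j} : Finset δ) := by
              simp [Finset.disjoint_singleton_right, hjt]
            rw [h1, h2, lmarginal_union μ _ ((hf i).pow_const s) hdisj]
          · have h1 : (fun z => F i z ^ s) = fun z => f i z ^ s := by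
              funext z
              rw [hF]; dsimp only
              rw [if_neg hij]
            rw [h1, Finset.inter_insert_of_notMem hij]

end Finner


/-- The `|τ|`-dimensional volume of (the orthogonal projection onto the coordinate subspace
`H_τ = span{eᵢ : i ∈ τ}` of) a set `A ⊆ ℝⁿ`, computed as the Lebesgue measure of the image of
`A` under the restriction-of-coordinates map to `τ`. -/
noncomputable def coordVol {n : ℕ} (τ : Finset (Fin n)) (A : Set (Fin n → ℝ)) : ENNReal :=
  volume ((fun (x : Fin n → ℝ) (j : {j // j ∈ τ}) => x j.1) '' A)

/-- **Bollobás–Thomason inequality.** If `K` is a convex body in `ℝⁿ` and `(σ₁,…,σ_m)` is an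
`s`-cover of `[n]`, then `vol_n(K)^s ≤ ∏ᵢ vol_{|σᵢ|}(P_{H_{σᵢ}} K)`. -/

theorem bollobas_thomason {n m s : ℕ} (K : Set (Fin n → ℝ))
    (hconv : Convex ℝ K) (hcomp : IsCompact K) (hint : (interior K).Nonempty)
    (σs : Fin m → Finset (Fin n))
    (hcov : ∀ j : Fin n, (Finset.univ.filter fun i => j ∈ σs i).card = s) :
    (volume K) ^ s ≤ ∏ i, coordVol (σs i) K := by
  classical
  have hKne : K.Nonempty := hint.mono interior_subset
  -- the coordinate restriction maps and the projected / cylinder sets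
  have hrcont : ∀ i : Fin m,
      Continuous (fun (x : Fin n → ℝ) (j : {j // j ∈ σs i}) => x j.1) :=
    fun i => continuous_pi fun j => continuous_apply j.1
  set D : ∀ i : Fin m, Set ({j // j ∈ σs i} → ℝ) :=
    fun i => (fun (x : Fin n → ℝ) (j : {j // j ∈ σs i}) => x j.1) '' K with hD
  have hDcomp : ∀ i, IsCompact (D i) := fun i => hcomp.image (hrcont i)
  have hDmeas : ∀ i, MeasurableSet (D i) := fun i => (hDcomp i).isClosed.measurableSet
  set C : ∀ i : Fin m, Set (Fin n → ℝ) :=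
    fun i => (fun (x : Fin n → ℝ) (j : {j // j ∈ σs i}) => x j.1) ⁻¹' (D i) with hC
  have hCmeas : ∀ i, MeasurableSet (C i) :=
    fun i => (hDmeas i).preimage (hrcont i).measurable
  have hKC : ∀ i, K ⊆ C i := fun i x hx => Set.mem_image_of_mem _ hx
  rcases Nat.eq_zero_or_pos s with rfl | hs
  · -- degenerate case `s = 0`: all `σᵢ` are empty and both sides equal `1`
    have hσ : ∀ i, σs i = ∅ := by
      intro i
      by_contra h
      obtain ⟨j, hj⟩ := Finset.nonempty_iff_ne_empty.2 h
      have := hcov j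
      rw [Finset.card_eq_zero, Finset.filter_eq_empty_iff] at this
      exact this (Finset.mem_univ i) hj
    have h1 : ∀ i : Fin m, coordVol (σs i) K = 1 := by
      intro i
      have hempty : IsEmpty {j // j ∈ σs i} :=
        ⟨fun j => (Finset.notMem_empty j.1) (hσ i ▸ j.2)⟩
      have huniv : (fun (x : Fin n → ℝ) (j : {j // j ∈ σs i}) => x j.1) '' K = Set.univ := by
        obtain ⟨x, hx⟩ := hKne
        refine Set.eq_univ_of_forall fun y => ?_
        have : y = fun j : {j // j ∈ σs i} => x j.1 := by
          funext j; exact (hempty.false j).elim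
        rw [this]
        exact Set.mem_image_of_mem _ hx
      rw [coordVol, huniv, MeasureTheory.volume_pi, Measure.pi_univ]
      simp [Finset.univ_eq_empty]
    simp [h1]
  · -- main case: apply Finner's inequality to the indicator functions of the cylinders `Cᵢ`
    set f : Fin m → (Fin n → ℝ) → ℝ≥0∞ := fun i => (C i).indicator 1 with hf
    have hfmeas : ∀ i, Measurable (f i) := fun i => measurable_one.indicator (hCmeas i)
    have hfdep : ∀ i, ∀ x y : Fin n → ℝ, (∀ j ∈ σs i, x j = y j) → f i x = f i y := by
      intro i x y hxy
      have hrxy : (fun j : {j // j ∈ σs i} => x j.1) = fun j : {j // j ∈ σs i} => y j.1 :=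
        funext fun j => hxy j.1 j.2
      rw [hf]
      simp only [Set.indicator_apply, hC, Set.mem_preimage, hrxy, Pi.one_apply]
    have key := finner_aux (μ := fun _ : Fin n => (volume : Measure ℝ)) hs.ne' σs hcov
      Finset.univ f hfmeas hfdep (fun _ => 0)
    -- the left-hand side dominates `volume K`
    have hL : volume K ≤ (∫⋯∫⁻_Finset.univ, (fun z => ∏ i, f i z) ∂fun _ => volume)
        (fun _ => 0) := by
      rw [lmarginal_univ]
      have h1 : volume K = ∫⁻ z, K.indicator 1 z ∂(volume : Measure (Fin n → ℝ)) := by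
        rw [lintegral_indicator_one hcomp.measurableSet]
      rw [h1, MeasureTheory.volume_pi]
      refine lintegral_mono fun z => ?_
      by_cases hz : z ∈ K
      · have : ∀ i, f i z = 1 := fun i => Set.indicator_of_mem (hKC i hz) 1
        simp [Set.indicator_of_mem hz, this]
      · simp [Set.indicator_of_notMem hz]
    -- identify the right-hand side factors with `coordVol`
    have hR : ∀ i : Fin m,
        (∫⋯∫⁻_(σs i ∩ Finset.univ), (fun z => f i z ^ s) ∂fun _ => (volume : Measure ℝ))
          (fun _ => 0) = coordVol (σs i) K := by
      intro i
      have h1 : (fun z => f i z ^ s) = f i := by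
        funext z
        by_cases hz : z ∈ C i
        · simp [hf, Set.indicator_of_mem hz, Pi.one_apply]
        · simp [hf, Set.indicator_of_notMem hz, zero_pow hs.ne']
      rw [Finset.inter_univ, h1, lmarginal]
      have h2 : ∀ y : ∀ j : {j // j ∈ σs i}, ℝ,
          f i (Function.updateFinset (fun _ => (0:ℝ)) (σs i) y) = (D i).indicator 1 y := by
        intro y
        have h3 : (fun j : {j // j ∈ σs i} =>
            Function.updateFinset (fun _ => (0:ℝ)) (σs i) y j.1) = y := by
          funext j
          simp [Function.updateFinset, j.2]
        rw [hf]
        simp only [Set.indicator_apply, hC, Set.mem_preimage, h3, Pi.one_apply]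
      simp_rw [h2]
      rw [lintegral_indicator_one (hDmeas i)]
      rw [coordVol, MeasureTheory.volume_pi]
    calc (volume K) ^ s
        ≤ ((∫⋯∫⁻_Finset.univ, (fun z => ∏ i, f i z) ∂fun _ => volume) (fun _ => 0)) ^ s := by
          exact pow_le_pow_left' hL s
      _ ≤ (∏ i, ((∫⋯∫⁻_(σs i ∩ Finset.univ), (fun z => f i z ^ s)
            ∂fun _ => (volume : Measure ℝ)) (fun _ => 0)) ^ ((s : ℝ)⁻¹)) ^ s := by
          exact pow_le_pow_left' key s
      _ = ∏ i, (∫⋯∫⁻_(σs i ∩ Finset.univ), (fun z => f i z ^ s)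
            ∂fun _ => (volume : Measure ℝ)) (fun _ => 0) := by
          rw [← Finset.prod_pow]
          exact Finset.prod_congr rfl fun i _ => rpow_inv_nat_pow hs.ne' _
      _ = ∏ i, coordVol (σs i) K := Finset.prod_congr rfl fun i _ => hR i
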